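/- Let α and β be strong compositions and let A and B be any words over the positive integers with no letter in common such that Des(A) = α and Des(B) = β. Then for every n ≥ 1, F_α(x_1,…,x_n) · F_β(x_1,…,x_n) = Σ_{C ∈ A ⧢ B} F_{Des(C)}(x_1,…,x_n). -/

import Mathlib

open scoped Classical

namespace SlidePaper

/-- Sum of the first `i` entries of a weak composition of length `n`. -/
def psum {n : ℕ} (a : Fin n → ℕ) (i : ℕ) : ℕ :=
  ∑ j ∈ Finset.univ.filter (fun j : Fin n => (j : ℕ) < i), a j

/-- `b` dominates `a`: all partial sums of `b` are at least those of `a`. -/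
def Dominates {n : ℕ} (b a : Fin n → ℕ) : Prop :=
  ∀ i : Fin (n + 1), psum a i ≤ psum b i

/-- The flattening of a weak composition: the list of its nonzero entries in order. -/
def flat {n : ℕ} (a : Fin n → ℕ) : List ℕ :=
  (List.ofFn a).filter (fun x => x ≠ 0)

/-- `β` refines `α`: `β` splits into consecutive blocks with sums `α₁, α₂, …`. -/
def Refines (β α : List ℕ) : Prop :=
  ∃ L : List (List ℕ), L.flatten = β ∧ L.map List.sum = α

/-- All weak compositions of length `n` with entries at most `k`. -/
def wcFinset (n k : ℕ) : Finset (Fin n → ℕ) :=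
  Fintype.piFinset fun _ => Finset.range (k + 1)

/-- The monomial slide polynomial `𝔐_a`. -/
noncomputable def slideM {n : ℕ} (a : Fin n → ℕ) : MvPolynomial (Fin n) ℤ :=
  ∑ b ∈ (wcFinset n (∑ i, a i)).filter (fun b => Dominates b a ∧ flat b = flat a),
    MvPolynomial.monomial (Finsupp.equivFunOnFinite.symm b) 1

/-- The fundamental slide polynomial `𝔉_a`. -/
noncomputable def slideF {n : ℕ} (a : Fin n → ℕ) : MvPolynomial (Fin n) ℤ :=
  ∑ b ∈ (wcFinset n (∑ i, a i)).filter (fun b => Dominates b a ∧ Refines (flat b) (flat a)),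
    MvPolynomial.monomial (Finsupp.equivFunOnFinite.symm b) 1

/-- A weak composition is quasi-flat if its nonzero entries occupy consecutive positions. -/
def QuasiFlat {n : ℕ} (a : Fin n → ℕ) : Prop :=
  ∀ i j l : Fin n, i ≤ j → j ≤ l → a i ≠ 0 → a l ≠ 0 → a j ≠ 0

/-- `b` strongly dominates `a`. -/
def StronglyDominates {n : ℕ} (b a : Fin n → ℕ) : Prop :=
  Dominates b a ∧ ∀ c : Fin n → ℕ, Dominates c a → flat c = flat b → Dominates c b

/-- The exponent vector placing the parts of `α` at the positions `i`. -/
noncomputable def placeExp {n : ℕ} (α : List ℕ) (i : Fin α.length → Fin n) : Fin n →₀ ℕ :=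
  ∑ t : Fin α.length, Finsupp.single (i t) (α.get t)

/-- `f` is quasisymmetric in the variables `x_1, …, x_k` (0-indexed: `x_0, …, x_{k-1}`). -/
def IsQuasisymmetricIn {n : ℕ} (k : ℕ) (f : MvPolynomial (Fin n) ℤ) : Prop :=
  ∀ α : List ℕ, (∀ x ∈ α, 0 < x) →
    ∀ i j : Fin α.length → Fin n, StrictMono i → StrictMono j →
      (∀ t, (i t : ℕ) < k) → (∀ t, (j t : ℕ) < k) →
      MvPolynomial.coeff (placeExp α i) f = MvPolynomial.coeff (placeExp α j) f

/-- The monomial quasisymmetric polynomial `M_α(x_1, …, x_k)` inside `ℤ[x_1, …, x_n]`. -/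
noncomputable def Mqs (n k : ℕ) (α : List ℕ) : MvPolynomial (Fin n) ℤ :=
  ∑ i ∈ (Finset.univ : Finset (Fin α.length → Fin n)).filter
      (fun i : Fin α.length → Fin n => StrictMono i ∧ ∀ t, (i t : ℕ) < k),
    ∏ t : Fin α.length, (MvPolynomial.X (i t) : MvPolynomial (Fin n) ℤ) ^ α.get t

/-- The fundamental quasisymmetric polynomial `F_α(x_1, …, x_k)` inside `ℤ[x_1, …, x_n]`. -/
noncomputable def Fqs (n k : ℕ) (α : List ℕ) : MvPolynomial (Fin n) ℤ :=
  ∑ c ∈ (Finset.univ : Finset (Composition α.sum)).filter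
      (fun c => Refines c.blocks α ∧ c.blocks.length ≤ k),
    Mqs n k c.blocks

/-- Place the weak composition `a` (of length `N`) at offset `k` inside length `M`. -/
def shiftComp {N : ℕ} (k M : ℕ) (a : Fin N → ℕ) : Fin M → ℕ :=
  fun i => if h : k ≤ (i : ℕ) ∧ (i : ℕ) - k < N then a ⟨(i : ℕ) - k, h.2⟩ else 0

/-- Spread the values `g` to positions `ι` inside a weak composition of length `n`. -/
def spread {l n : ℕ} (ι : Fin l → Fin n) (g : Fin l → ℕ) : Fin n → ℕ :=
  fun i => ∑ k, if ι k = i then g k else 0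

/-- The monomial quasisymmetric function `M_α` in infinitely many variables. -/
noncomputable def MqsFun (α : List ℕ) : MvPowerSeries ℕ ℤ :=
  fun d => if ∃ i : Fin α.length → ℕ, StrictMono i ∧
      d = ∑ t : Fin α.length, Finsupp.single (i t) (α.get t) then 1 else 0

/-- The fundamental quasisymmetric function `F_α` in infinitely many variables. -/
noncomputable def FqsFun (α : List ℕ) : MvPowerSeries ℕ ℤ :=
  ∑ c ∈ (Finset.univ : Finset (Composition α.sum)).filter (fun c => Refines c.blocks α),
    MqsFun c.blocks

/-- The cells of the Young diagram of `lam` (French notation): row `r` (from the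
bottom, 0-indexed) has `lam.get r` cells. -/
abbrev Cells (lam : List ℕ) := Σ r : Fin lam.length, Fin (lam.get r)

/-- A filling of `lam` with entries in `{1, …, n}` (encoded as `Fin n`) is a semistandard
Young tableau: rows weakly increase left to right, columns strictly increase bottom to top. -/
def IsSSYT {n : ℕ} {lam : List ℕ} (T : Cells lam → Fin n) : Prop :=
  (∀ (r : Fin lam.length) (c c' : Fin (lam.get r)), c ≤ c' → T ⟨r, c⟩ ≤ T ⟨r, c'⟩) ∧
  (∀ (r r' : Fin lam.length) (c' : Fin (lam.get r')) (h : (c' : ℕ) < lam.get r),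
      (r : ℕ) < (r' : ℕ) → T ⟨r, ⟨c', h⟩⟩ < T ⟨r', c'⟩)

/-- The weight of a filling: the `v`-th entry counts the occurrences of the value `v`. -/
def wtT {n : ℕ} {lam : List ℕ} (T : Cells lam → Fin n) : Fin n → ℕ :=
  fun v => (Finset.univ.filter (fun x : Cells lam => T x = v)).card

/-- A filling is quasi-Yamanouchi if for every value `v > 1`, the leftmost occurrence of `v`
lies weakly left of some occurrence of `v - 1`. -/
def IsQY {n : ℕ} {lam : List ℕ} (T : Cells lam → Fin n) : Prop :=
  ∀ (v : Fin n) (x : Cells lam), T x = v → 0 < (v : ℕ) →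
    (∀ y : Cells lam, T y = v → (x.2 : ℕ) ≤ (y.2 : ℕ)) →
    ∃ z : Cells lam, (T z : ℕ) + 1 = (v : ℕ) ∧ (x.2 : ℕ) ≤ (z.2 : ℕ)

/-- The Schur polynomial `s_lam(x_1, …, x_n)` as the generating function of
semistandard Young tableaux. -/
noncomputable def schurPoly (n : ℕ) (lam : List ℕ) : MvPolynomial (Fin n) ℤ :=
  ∑ T ∈ (Finset.univ : Finset (Cells lam → Fin n)).filter (fun T => IsSSYT T),
    MvPolynomial.monomial (Finsupp.equivFunOnFinite.symm (wtT T)) 1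

/-- One destandardization step on fillings: for some value `v` occurring in `T` whose
leftmost occurrence is strictly right of every occurrence of `v - 1`, every `v` is
decremented to `v - 1`. -/
def TabStep {n : ℕ} {lam : List ℕ} (T T' : Cells lam → Fin n) : Prop :=
  ∃ v : Fin n, 0 < (v : ℕ) ∧ (∃ x, T x = v) ∧
    (∀ x y : Cells lam, T x = v → (T y : ℕ) + 1 = (v : ℕ) → (y.2 : ℕ) < (x.2 : ℕ)) ∧
    ∀ x : Cells lam, (T' x : ℕ) = if T x = v then (v : ℕ) - 1 else (T x : ℕ)

/-- The reading word of a set of crosses: rows are read from top to bottom, each row from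
left to right, the cross in (0-indexed) row `i` and column `j` recording the letter `i + j`
(representing the simple transposition swapping `i + j` and `i + j + 1` of `{0, 1, 2, …}`). -/
def readWord (P : Finset (ℕ × ℕ)) : List ℕ :=
  ((List.range (P.sup Prod.fst + 1)).reverse).flatMap
    (fun i => ((List.range (P.sup Prod.snd + 1)).filter (fun j => decide ((i, j) ∈ P))).map
      (fun j => i + j))

/-- The permutation `s_{i_ℓ} ⋯ s_{i_1}` associated to the word `(i_1, …, i_ℓ)`,
where `s_k` swaps `k` and `k + 1`. -/
def wordPerm (l : List ℕ) : Equiv.Perm ℕ :=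
  ((l.map (fun k => Equiv.swap k (k + 1))).reverse).prod

/-- A word is reduced if no shorter word has the same product. -/
def IsReducedWord (l : List ℕ) : Prop :=
  ∀ l' : List ℕ, wordPerm l' = wordPerm l → l.length ≤ l'.length

/-- `P` is a reduced pipe dream of shape `w`: the pipes trace out `w` and no two pipes
cross more than once, equivalently the reading word of `P` is a reduced word for `w`. -/
def IsPD (w : Equiv.Perm ℕ) (P : Finset (ℕ × ℕ)) : Prop :=
  wordPerm (readWord P) = w ∧ IsReducedWord (readWord P)

/-- `P` is a quasi-Yamanouchi pipe dream of shape `w`: for every row, the westernmost cross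
is in the first column or lies weakly west of some cross in the row above. -/
def IsQPD (w : Equiv.Perm ℕ) (P : Finset (ℕ × ℕ)) : Prop :=
  IsPD w P ∧ ∀ i j : ℕ, (i, j) ∈ P → (∀ j', (i, j') ∈ P → j ≤ j') →
    (j = 0 ∨ ∃ j', (i + 1, j') ∈ P ∧ j ≤ j')

/-- One destandardization step on pipe dreams: a row with no cross in the first column,
all of whose crosses lie strictly east of every cross in the row above, has all its
crosses moved one step northwest. -/
def PDStep (P P' : Finset (ℕ × ℕ)) : Prop :=
  ∃ r : ℕ, (∃ j, (r, j) ∈ P) ∧ (r, 0) ∉ P ∧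
    (∀ j j', (r, j) ∈ P → (r + 1, j') ∈ P → j' < j) ∧
    P' = P.filter (fun p => p.1 ≠ r) ∪
      (P.filter (fun p => p.1 = r)).image (fun p => (r + 1, p.2 - 1))

/-- The number of crosses of `P` in (0-indexed) row `i`. -/
def rowWt (P : Finset (ℕ × ℕ)) (i : ℕ) : ℕ := (P.filter (fun p => p.1 = i)).card

/-- The weight of a pipe dream, as a weak composition of length `n`. -/
def wtFin (n : ℕ) (P : Finset (ℕ × ℕ)) : Fin n → ℕ := fun i => rowWt P (i : ℕ)

/-- The flattened weight of a pipe dream: the list of nonzero row counts, bottom row first. -/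
def flatWt (P : Finset (ℕ × ℕ)) : List ℕ :=
  ((List.range (P.sup Prod.fst + 1)).map (rowWt P)).filter (fun x => x ≠ 0)

/-- The Schubert polynomial of `w` in the variables `x_1, …, x_n`, as the generating
function of reduced pipe dreams of shape `w`. -/
noncomputable def SchubertPoly (n : ℕ) (w : Equiv.Perm ℕ) : MvPolynomial (Fin n) ℤ :=
  ∑ᶠ P ∈ {P : Finset (ℕ × ℕ) | IsPD w P},
    MvPolynomial.monomial (Finsupp.equivFunOnFinite.symm (wtFin n P)) 1

/-- The Lehmer code of `w` (0-indexed): `lehmer w i` counts `j > i` with `w j < w i`. -/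
noncomputable def lehmer (w : Equiv.Perm ℕ) (i : ℕ) : ℕ :=
  Set.ncard {j : ℕ | i < j ∧ w j < w i}

/-- The Lehmer code of `w` as a weak composition of length `n`. -/
noncomputable def lehmerFin (n : ℕ) (w : Equiv.Perm ℕ) : Fin n → ℕ :=
  fun i => lehmer w (i : ℕ)

/-- The number of inversions of `w`. -/
noncomputable def invCount (w : Equiv.Perm ℕ) : ℕ :=
  Set.ncard {p : ℕ × ℕ | p.1 < p.2 ∧ w p.2 < w p.1}

/-- The largest entry of the Lehmer code of `w`. -/
noncomputable def maxLehmer (w : Equiv.Perm ℕ) : ℕ :=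
  sSup (Set.range (lehmer w))

/-- The (0-indexed) position of the first descent of `w`. -/
noncomputable def firstDescent (w : Equiv.Perm ℕ) : ℕ :=
  sInf {i : ℕ | w (i + 1) < w i}

/-- `δ(w) = 1` if every position attaining `max(L(w))` is at or before the first descent,
and `δ(w) = 0` otherwise. -/
noncomputable def delta (w : Equiv.Perm ℕ) : ℤ :=
  if ∀ i : ℕ, lehmer w i = maxLehmer w → i ≤ firstDescent w then 1 else 0

/-- `η(w) = inv(w) − max(L(w)) + δ(w) − min{i : w_i > w_{i+1}}`. -/
noncomputable def eta (w : Equiv.Perm ℕ) : ℤ :=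
  (invCount w : ℤ) - (maxLehmer w : ℤ) + delta w - ((firstDescent w : ℤ) + 1)

/-- The decomposition of a list into maximal strictly increasing runs. -/
def runsStrict : List ℕ → List (List ℕ)
  | [] => []
  | x :: rest =>
    match runsStrict rest, rest with
    | r :: rs, y :: _ => if x < y then (x :: r) :: rs else [x] :: r :: rs
    | _, _ => [[x]]

/-- The descent composition of a word: lengths of its maximal increasing runs, a new run
beginning whenever a letter is followed by a weakly smaller letter. -/
def desStrict (l : List ℕ) : List ℕ := (runsStrict l).map List.length

/-- The decomposition of a list into maximal weakly increasing runs. -/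
def runsWeak : List ℕ → List (List ℕ)
  | [] => []
  | x :: rest =>
    match runsWeak rest, rest with
    | r :: rs, y :: _ => if x ≤ y then (x :: r) :: rs else [x] :: r :: rs
    | _, _ => [[x]]

/-- The descent composition of a word: the lengths of its maximal weakly increasing runs. -/
def desComp (l : List ℕ) : List ℕ := (runsWeak l).map List.length

/-- The permutation `1^m × w`, fixing `0, …, m-1` and acting by `w` shifted by `m` above. -/
def shiftPerm (m : ℕ) (w : Equiv.Perm ℕ) : Equiv.Perm ℕ where
  toFun i := if i < m then i else w (i - m) + m
  invFun i := if i < m then i else w.symm (i - m) + m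
  left_inv i := by
    dsimp only
    by_cases h : i < m
    · simp [h]
    · have h2 : ¬ (w (i - m) + m < m) := by omega
      rw [if_neg h, if_neg h2, Nat.add_sub_cancel, Equiv.symm_apply_apply]
      omega
  right_inv i := by
    dsimp only
    by_cases h : i < m
    · simp [h]
    · have h2 : ¬ (w.symm (i - m) + m < m) := by omega
      rw [if_neg h, if_neg h2, Nat.add_sub_cancel, Equiv.apply_symm_apply]
      omega

/-- The quasi-shuffle product of two (strong) compositions, as a multiset of compositions. -/
def qShuffle : List ℕ → List ℕ → Multiset (List ℕ)
  | [], β => {β}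
  | α, [] => {α}
  | a :: α, b :: β =>
      ((qShuffle α (b :: β)).map (a :: ·)) + ((qShuffle (a :: α) β).map (b :: ·)) +
        ((qShuffle α β).map ((a + b) :: ·))
termination_by α β => α.length + β.length
decreasing_by all_goals (simp only [List.length_cons]; omega)

def shuffles : List ℕ → List ℕ → Multiset (List ℕ)
  | [], B => {B}
  | A, [] => {A}
  | x :: A, y :: B =>
      ((shuffles A (y :: B)).map (x :: ·)) + ((shuffles (x :: A) B).map (y :: ·))
termination_by A B => A.length + B.length
decreasing_by all_goals (simp only [List.length_cons]; omega)

/-- The word `(2n-1)^{a_1} (2n-3)^{a_2} ⋯ 1^{a_n}` associated to a weak composition `a`. -/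
def wordA {n : ℕ} (a : Fin n → ℕ) : List ℕ :=
  (List.ofFn (fun i : Fin n => List.replicate (a i) (2 * n - 2 * (i : ℕ) - 1))).flatten

/-- The word `(2n)^{b_1} (2n-2)^{b_2} ⋯ 2^{b_n}` associated to a weak composition `b`. -/
def wordB {n : ℕ} (b : Fin n → ℕ) : List ℕ :=
  (List.ofFn (fun i : Fin n => List.replicate (b i) (2 * n - 2 * (i : ℕ)))).flatten

/-- A list (padded with trailing zeros) dominates a weak composition of length `n`. -/
def DominatesList {n : ℕ} (l : List ℕ) (a : Fin n → ℕ) : Prop :=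
  ∀ i : Fin (n + 1), psum a (i : ℕ) ≤ ((l.take (i : ℕ)).sum)

/-- The number of letters of the `A`-word (the odd letters) in the `k`-th weakly
increasing run of `C`. -/
def runCountA (C : List ℕ) (k : Fin (runsWeak C).length) : ℕ :=
  (((runsWeak C).get k).filter (fun z => z % 2 = 1)).length

/-- The number of letters of the `B`-word (the even letters) in the `k`-th weakly
increasing run of `C`. -/
def runCountB (C : List ℕ) (k : Fin (runsWeak C).length) : ℕ :=
  (((runsWeak C).get k).filter (fun z => z % 2 = 0)).length

/-- The length of the `k`-th weakly increasing run of `C`. -/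
def runLen (C : List ℕ) (k : Fin (runsWeak C).length) : ℕ :=
  ((runsWeak C).get k).length

/-- `c = bump_{(a,b)}(C)`: the unique weak composition of length `n` obtained by inserting
zero parts into `Des(C)` so that the correspondingly placed `Des_A` and `Des_B` dominate
`a` and `b`, minimal in dominance order among all such insertions. -/
def IsBumpS {n : ℕ} (a b : Fin n → ℕ) (C : List ℕ) (c : Fin n → ℕ) : Prop :=
  ∃ ι : Fin (runsWeak C).length → Fin n, StrictMono ι ∧
    c = spread ι (runLen C) ∧
    Dominates (spread ι (runCountA C)) a ∧ Dominates (spread ι (runCountB C)) b ∧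
    ∀ ι' : Fin (runsWeak C).length → Fin n, StrictMono ι' →
      Dominates (spread ι' (runCountA C)) a → Dominates (spread ι' (runCountB C)) b →
      Dominates (spread ι' (runLen C)) c

/-- The multiplicity `[c ∣ a ⧢ b]` of `c` in the slide product of `a` and `b`: the number of
shuffles `C` of the words of `a` and `b` lying in the shuffle set `SS(a,b)` with
`bump_{(a,b)}(C) = c`. -/
noncomputable def slideMult {n : ℕ} (a b c : Fin n → ℕ) : ℕ :=
  Multiset.card ((shuffles (wordA a) (wordB b)).filter
    (fun C => DominatesList ((runsWeak C).map
        (fun r => (r.filter (fun z => z % 2 = 1)).length)) a ∧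
      DominatesList ((runsWeak C).map (fun r => (r.filter (fun z => z % 2 = 0)).length)) b ∧
      IsBumpS a b C c))

/-- Membership in the quasi-shuffle set `QSS(a,b)`: a pair `(γ_a, γ_b)` of weak compositions
of a common length at most `n` with `γ_a ≥ a`, `flat(γ_a) = flat(a)`, `γ_b ≥ b`,
`flat(γ_b) = flat(b)` (after padding with trailing zeros), and all entries of
`γ_a + γ_b` positive. -/
def InQSS {n : ℕ} (a b : Fin n → ℕ) (x : (l : ℕ) × (Fin l → ℕ) × (Fin l → ℕ)) : Prop :=
  x.1 ≤ n ∧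
  Dominates (shiftComp 0 n x.2.1) a ∧ flat x.2.1 = flat a ∧
  Dominates (shiftComp 0 n x.2.2) b ∧ flat x.2.2 = flat b ∧
  ∀ k : Fin x.1, 0 < x.2.1 k + x.2.2 k

/-- `c = bump_{(a,b)}(γ_a, γ_b)`: the unique weak composition `c` of length `n` with
`flat(c) = γ_a + γ_b` whose decomposition `c = c_a + c_b` satisfies `c_a ≥ a` and
`c_b ≥ b`, minimal in dominance order among all such compositions. -/
def IsBumpQ {n : ℕ} (a b : Fin n → ℕ) (x : (l : ℕ) × (Fin l → ℕ) × (Fin l → ℕ))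
    (c : Fin n → ℕ) : Prop :=
  ∃ ι : Fin x.1 → Fin n, StrictMono ι ∧
    c = spread ι (fun k => x.2.1 k + x.2.2 k) ∧
    Dominates (spread ι x.2.1) a ∧ Dominates (spread ι x.2.2) b ∧
    ∀ ι' : Fin x.1 → Fin n, StrictMono ι' →
      Dominates (spread ι' x.2.1) a → Dominates (spread ι' x.2.2) b →
      Dominates (spread ι' (fun k => x.2.1 k + x.2.2 k)) c

/-- The multiplicity `[c ∣ a ⧻ b]` of `c` in the quasi-slide product of `a` and `b`: the
number of pairs in the quasi-shuffle set `QSS(a,b)` whose bump is `c`. -/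
noncomputable def qsMult {n : ℕ} (a b c : Fin n → ℕ) : ℕ :=
  Nat.card {x : (l : ℕ) × (Fin l → ℕ) × (Fin l → ℕ) // InQSS a b x ∧ IsBumpQ a b x c}

/-- The Stanley symmetric function `S_w`. -/
noncomputable def StanleySym (w : Equiv.Perm ℕ) : MvPowerSeries ℕ ℤ :=
  ∑ᶠ l ∈ {l : List ℕ | wordPerm l = w ∧ IsReducedWord l}, FqsFun (desStrict l)

lemma Refines.sum_eq {β α : List ℕ} (h : Refines β α) : β.sum = α.sum := by
  obtain ⟨L, rfl, rfl⟩ := h; simp [List.sum_flatten]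
noncomputable def refC (α : List ℕ) : Finset (List ℕ) :=
  (Finset.univ.filter (fun c : Composition α.sum => Refines c.blocks α)).image Composition.blocks
lemma mem_refC {α β : List ℕ} : β ∈ refC α ↔ Refines β α ∧ ∀ x ∈ β, 0 < x := by
  constructor
  · rintro h
    simp only [refC, Finset.mem_image, Finset.mem_filter] at h
    obtain ⟨c, ⟨-, hc⟩, rfl⟩ := h
    exact ⟨hc, fun x hx => c.blocks_pos hx⟩
  · rintro ⟨h1, h2⟩
    simp only [refC, Finset.mem_image, Finset.mem_filter]
    exact ⟨⟨β, fun {i} hi => h2 i hi, h1.sum_eq⟩, ⟨Finset.mem_univ _, h1⟩, rfl⟩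

lemma refines_cons_iff {a : ℕ} (ha : 0 < a) {α β : List ℕ} (hβ : ∀ x ∈ β, 0 < x) :
    Refines β (a :: α) ↔ ∃ s < a, ∃ γ,
      (if s = 0 then Refines γ α else Refines γ (s :: α)) ∧ β = (a - s) :: γ := by
  constructor
  · rintro ⟨L, hf, hs⟩
    match L, hs with
    | L₀ :: L', hs =>
      simp only [List.map_cons, List.cons.injEq] at hs
      obtain ⟨hL₀, hL'⟩ := hs
      match L₀, hL₀ with
      | [], hL₀ => simp at hL₀; omega
      | t :: u, hL₀ =>
        have ht : t + u.sum = a := by simpa using hL₀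
        have htβ : 0 < t := by
          apply hβ; rw [← hf]; simp
        have hu : ∀ x ∈ u, 0 < x := by
          intro x hx; apply hβ; rw [← hf]; simp [hx]
        refine ⟨a - t, by omega, u ++ L'.flatten, ?_, ?_⟩
        · by_cases h0 : a - t = 0
          · have : u = [] := by
              have : u.sum = 0 := by omega
              cases u with
              | nil => rfl
              | cons z w => exact absurd (hu z (by simp)) (by simp at this; omega)
            simp [h0, this]
            exact ⟨L', rfl, hL'⟩
          · rw [if_neg h0]
            exact ⟨u :: L', by simp, by simp [hL']; omega⟩
        · rw [← hf]; simp; omega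
  · rintro ⟨s, hs, γ, hγ, rfl⟩
    by_cases h0 : s = 0
    · rw [if_pos h0] at hγ
      obtain ⟨L', h1, h2⟩ := hγ
      exact ⟨[a] :: L', by simp [h1, h0], by simp [h2]⟩
    · rw [if_neg h0] at hγ
      obtain ⟨G, h1, h2⟩ := hγ
      match G, h2 with
      | G₀ :: G', h2 =>
        simp only [List.map_cons, List.cons.injEq] at h2
        refine ⟨((a - s) :: G₀) :: G', by simp [← h1], ?_⟩
        simp [h2.2]
        omega

lemma refC_cons {a : ℕ} (ha : 0 < a) (α : List ℕ) :
    refC (a :: α) = (Finset.range a).biUnion (fun s =>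
      ((if s = 0 then refC α else refC (s :: α))).image (fun γ => (a - s) :: γ)) := by
  ext β
  simp only [mem_refC, Finset.mem_biUnion, Finset.mem_range, Finset.mem_image]
  constructor
  · rintro ⟨h1, h2⟩
    obtain ⟨s, hs, γ, hγ, rfl⟩ := (refines_cons_iff ha h2).mp h1
    refine ⟨s, hs, γ, ?_, rfl⟩
    split_ifs with h0
    · rw [if_pos h0] at hγ
      exact mem_refC.mpr ⟨hγ, fun x hx => h2 x (by simp [hx])⟩
    · rw [if_neg h0] at hγ
      exact mem_refC.mpr ⟨hγ, fun x hx => h2 x (by simp [hx])⟩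
  · rintro ⟨s, hs, γ, hγ, rfl⟩
    have hγ' : (Refines γ (if s = 0 then α else s :: α)) ∧ ∀ x ∈ γ, 0 < x := by
      split_ifs with h0
      · rw [if_pos h0] at hγ; exact mem_refC.mp hγ
      · rw [if_neg h0] at hγ; exact mem_refC.mp hγ
    have hpos : ∀ x ∈ (a - s) :: γ, 0 < x := by
      intro x hx
      rcases List.mem_cons.mp hx with rfl | hx
      · omega
      · exact hγ'.2 x hx
    refine ⟨(refines_cons_iff ha hpos).mpr ⟨s, hs, γ, ?_, rfl⟩, hpos⟩
    split_ifs with h0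
    · simpa [h0] using hγ'.1
    · simpa [h0] using hγ'.1

noncomputable def Isum (n v : ℕ) (β : List ℕ) : MvPolynomial (Fin n) ℤ :=
  ∑ i ∈ Finset.univ.filter
      (fun i : Fin β.length → Fin n => StrictMono i ∧ ∀ t, v ≤ (i t : ℕ)),
    MvPolynomial.monomial (∑ t, Finsupp.single (i t) (β.get t)) 1

lemma Isum_nil (n v : ℕ) : Isum n v [] = 1 := by
  rw [Isum]
  rw [show (Finset.univ.filter
      (fun i : Fin ([] : List ℕ).length → Fin n => StrictMono i ∧ ∀ t, v ≤ (i t : ℕ)))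
    = {(Fin.elim0 : Fin 0 → Fin n)} from ?_]
  · simp
  · ext i
    simp only [Finset.mem_filter, Finset.mem_univ, true_and, Finset.mem_singleton]
    constructor
    · intro _; funext t; exact t.elim0
    · rintro rfl
      exact ⟨fun a => a.elim0, fun t => t.elim0⟩

lemma strictMono_cons_iff {m n : ℕ} (u : Fin n) (i : Fin m → Fin n) :
    StrictMono (Fin.cons u i : Fin (m+1) → Fin n) ↔ StrictMono i ∧ ∀ t, u < i t := by
  constructor
  · intro h
    constructor
    · intro a b hab
      have := h (show (Fin.succ a) < Fin.succ b from Fin.succ_lt_succ_iff.mpr hab)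
      simpa using this
    · intro t
      have := h (Fin.succ_pos t)
      simpa using this
  · rintro ⟨hi, hu⟩
    intro a b hab
    induction a using Fin.cases with
    | zero =>
      induction b using Fin.cases with
      | zero => exact absurd hab (lt_irrefl _)
      | succ t => simpa using hu t
    | succ s =>
      induction b using Fin.cases with
      | zero => exact absurd hab (by simp)
      | succ t =>
        have : s < t := Fin.succ_lt_succ_iff.mp hab
        simpa using hi this

lemma Isum_cons (n v b : ℕ) (β : List ℕ) :
    Isum n v (b :: β) = ∑ u ∈ Finset.univ.filter (fun u : Fin n => v ≤ (u : ℕ)),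
      (MvPolynomial.X u) ^ b * Isum n ((u : ℕ) + 1) β := by
  have key : ∀ (u : Fin n) (i : Fin β.length → Fin n),
      (if StrictMono (Fin.cons u i : Fin (β.length + 1) → Fin n)
          ∧ ∀ t : Fin (β.length + 1), v ≤ ((Fin.cons u i : Fin (β.length+1) → Fin n) t : ℕ)
        then (MvPolynomial.monomial
          (∑ t : Fin (β.length+1), Finsupp.single ((Fin.cons u i : Fin (β.length+1) → Fin n) t)
            ((b :: β).get t)) (1 : ℤ))
        else 0)
      = if v ≤ (u : ℕ) then
          (if StrictMono i ∧ ∀ t, (u : ℕ) + 1 ≤ (i t : ℕ) then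
            MvPolynomial.X u ^ b *
              MvPolynomial.monomial (∑ t, Finsupp.single (i t) (β.get t)) (1 : ℤ)
          else 0)
        else 0 := by
    intro u i
    have hcond : (StrictMono (Fin.cons u i : Fin (β.length + 1) → Fin n)
          ∧ ∀ t : Fin (β.length + 1), v ≤ ((Fin.cons u i : Fin (β.length+1) → Fin n) t : ℕ))
        ↔ (v ≤ (u : ℕ) ∧ StrictMono i ∧ ∀ t, (u : ℕ) + 1 ≤ (i t : ℕ)) := by
      rw [strictMono_cons_iff]
      constructor
      · rintro ⟨⟨h1, h2⟩, h3⟩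
        exact ⟨by simpa using h3 0, h1, fun t => by exact_mod_cast Fin.lt_iff_val_lt_val.mp (h2 t)⟩
      · rintro ⟨h1, h2, h3⟩
        refine ⟨⟨h2, fun t => ?_⟩, fun t => ?_⟩
        · exact Fin.lt_iff_val_lt_val.mpr (by have := h3 t; omega)
        · induction t using Fin.cases with
          | zero => simpa using h1
          | succ s => simp only [Fin.cons_succ]; have := h3 s; omega
    have hexp : (∑ t : Fin (β.length+1), Finsupp.single ((Fin.cons u i : Fin (β.length+1) → Fin n) t)
          ((b :: β).get t))
        = Finsupp.single u b + ∑ t, Finsupp.single (i t) (β.get t) := by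
      rw [Fin.sum_univ_succ]
      simp [Fin.cons_zero, Fin.cons_succ]
    rw [hexp]
    by_cases h : v ≤ (u : ℕ) ∧ StrictMono i ∧ ∀ t, (u : ℕ) + 1 ≤ (i t : ℕ)
    · rw [if_pos (hcond.mpr h), if_pos h.1, if_pos h.2]
      rw [MvPolynomial.X_pow_eq_monomial, MvPolynomial.monomial_mul, one_mul]
    · rw [if_neg (fun hc => h (hcond.mp hc))]
      by_cases h1 : v ≤ (u : ℕ)
      · rw [if_pos h1, if_neg (fun h2 => h ⟨h1, h2⟩)]
      · rw [if_neg h1]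
  -- now the sum manipulation
  rw [Isum, Finset.sum_filter]
  let e := (Fin.consEquiv (fun _ : Fin (β.length + 1) => Fin n))
  have step : (∑ i : Fin (b :: β).length → Fin n,
        if StrictMono i ∧ ∀ t, v ≤ (i t : ℕ) then
          MvPolynomial.monomial (∑ t, Finsupp.single (i t) ((b :: β).get t)) (1 : ℤ)
        else 0)
      = ∑ u : Fin n, ∑ i' : Fin β.length → Fin n,
          (if v ≤ (u : ℕ) then
            (if StrictMono i' ∧ ∀ t, (u : ℕ) + 1 ≤ (i' t : ℕ) then
              MvPolynomial.X u ^ b *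
                MvPolynomial.monomial (∑ t, Finsupp.single (i' t) (β.get t)) (1 : ℤ)
            else 0)
          else 0) := by
    rw [← Fintype.sum_prod_type']
    refine Fintype.sum_equiv e.symm _ _ (fun i => ?_)
    have h2 : (Fin.cons (e.symm i).1 (e.symm i).2 : Fin (β.length + 1) → Fin n) = i :=
      by have := Equiv.apply_symm_apply e i; exact this
    conv_lhs => rw [← h2]
    exact key (e.symm i).1 (e.symm i).2
  rw [step, Finset.sum_filter]
  refine Finset.sum_congr rfl (fun u _ => ?_)
  by_cases h1 : v ≤ (u : ℕ)
  · simp only [if_pos h1]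
    rw [Isum, Finset.sum_filter, Finset.mul_sum]
    refine Finset.sum_congr rfl (fun i _ => ?_)
    split_ifs with h2
    · rfl
    · rw [mul_zero]
  · simp only [if_neg h1, Finset.sum_const_zero]

noncomputable def Phi (n v : ℕ) (α : List ℕ) : MvPolynomial (Fin n) ℤ :=
  ∑ β ∈ refC α, Isum n v β

lemma refC_nil : refC ([] : List ℕ) = {[]} := by
  ext β
  simp only [mem_refC, Finset.mem_singleton]
  constructor
  · rintro ⟨⟨L, rfl, hL⟩, -⟩
    have : L = [] := by
      cases L with
      | nil => rfl
      | cons a l => simp at hL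
    simp [this]
  · rintro rfl
    exact ⟨⟨[], rfl, rfl⟩, by simp⟩

lemma Phi_nil (n v : ℕ) : Phi n v [] = 1 := by
  rw [Phi, refC_nil, Finset.sum_singleton, Isum_nil]

lemma Phi_cons_expand {a : ℕ} (ha : 0 < a) (n v : ℕ) (α : List ℕ) :
    Phi n v (a :: α) = ∑ u ∈ Finset.univ.filter (fun u : Fin n => v ≤ (u : ℕ)),
      ∑ s ∈ Finset.range a, (MvPolynomial.X u) ^ (a - s) *
        (if s = 0 then Phi n ((u : ℕ) + 1) α else Phi n ((u : ℕ) + 1) (s :: α)) := by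
  rw [Phi, refC_cons ha]
  rw [Finset.sum_biUnion]
  swap
  · intro s hs s' hs' hne
    simp only [Function.onFun]
    simp only [Finset.mem_coe, Finset.mem_range] at hs hs'
    rw [Finset.disjoint_left]
    intro β hβ hβ'
    simp only [Finset.mem_image] at hβ hβ'
    obtain ⟨γ, -, rfl⟩ := hβ
    obtain ⟨γ', -, h⟩ := hβ'
    apply hne
    have : a - s' = a - s := by exact (List.cons.injEq _ _ _ _ ▸ h).1
    omega
  calc ∑ s ∈ Finset.range a,
        ∑ β ∈ (if s = 0 then refC α else refC (s :: α)).image (fun γ => (a - s) :: γ),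
          Isum n v β
      = ∑ s ∈ Finset.range a, ∑ u ∈ Finset.univ.filter (fun u : Fin n => v ≤ (u : ℕ)),
          (MvPolynomial.X u) ^ (a - s) *
            (if s = 0 then Phi n ((u : ℕ) + 1) α else Phi n ((u : ℕ) + 1) (s :: α)) := by
        refine Finset.sum_congr rfl (fun s hs => ?_)
        rw [Finset.sum_image (by intro γ _ γ' _ h; exact (List.cons.injEq _ _ _ _ ▸ h).2)]
        simp only [Isum_cons]
        rw [Finset.sum_comm]
        refine Finset.sum_congr rfl (fun u _ => ?_)
        rw [← Finset.mul_sum]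
        congr 1
        split_ifs <;> rfl
    _ = _ := Finset.sum_comm

lemma filter_split (n : ℕ) (u : Fin n) :
    Finset.univ.filter (fun w : Fin n => (u : ℕ) ≤ (w : ℕ))
      = insert u (Finset.univ.filter (fun w : Fin n => (u : ℕ) + 1 ≤ (w : ℕ))) := by
  ext w
  simp only [Finset.mem_filter, Finset.mem_univ, true_and, Finset.mem_insert]
  rw [Fin.ext_iff]
  omega

lemma Phi_cons {a : ℕ} (ha : 0 < a) (n v : ℕ) (α : List ℕ) :
    Phi n v (a :: α) = ∑ u ∈ Finset.univ.filter (fun u : Fin n => v ≤ (u : ℕ)),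
      MvPolynomial.X u *
        (if a = 1 then Phi n ((u : ℕ) + 1) α else Phi n (u : ℕ) ((a - 1) :: α)) := by
  match a, ha with
  | m + 1, _ =>
  rw [Phi_cons_expand (Nat.succ_pos m)]
  refine Finset.sum_congr rfl (fun u _ => ?_)
  by_cases hm : m = 0
  · subst hm
    simp
  · rw [if_neg (by omega : ¬ m + 1 = 1)]
    have hm1 : (m + 1 - 1) = m := rfl
    rw [hm1]
    rw [Phi_cons_expand (Nat.pos_of_ne_zero hm) n (u : ℕ) α]
    rw [filter_split, Finset.sum_insert (by simp)]
    rw [← Phi_cons_expand (Nat.pos_of_ne_zero hm) n ((u : ℕ) + 1) α]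
    rw [mul_add]
    rw [Finset.sum_range_succ]
    refine congrArg₂ (· + ·) ?_ ?_
    · -- ∑ s ∈ range m, X^(m+1-s) * B s = X u * ∑ s ∈ range m, X^(m-s) * B s
      rw [Finset.mul_sum]
      refine Finset.sum_congr rfl (fun s hs => ?_)
      rw [← mul_assoc, ← pow_succ']
      congr 2
      simp only [Finset.mem_range] at hs
      omega
    · -- X^(m+1-m) * B m = X u * Phi (u+1) (m::α)
      rw [if_neg hm, (by omega : m + 1 - m = 1), pow_one]

lemma prod_X_pow {n : ℕ} {τ : Type*} (s : Finset τ) (g : τ → Fin n) (e : τ → ℕ) :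
    ∏ t ∈ s, (MvPolynomial.X (g t) : MvPolynomial (Fin n) ℤ) ^ e t
      = MvPolynomial.monomial (∑ t ∈ s, Finsupp.single (g t) (e t)) 1 := by
  induction s using Finset.cons_induction with
  | empty => simp
  | cons a s ha ih =>
      rw [Finset.prod_cons, Finset.sum_cons, ih, MvPolynomial.X_pow_eq_monomial,
        MvPolynomial.monomial_mul, one_mul]

lemma Mqs_eq_Isum (n : ℕ) (β : List ℕ) : Mqs n n β = Isum n 0 β := by
  rw [Mqs, Isum]
  refine Finset.sum_congr ?_ (fun i _ => prod_X_pow _ _ _)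
  refine Finset.filter_congr (fun i _ => ?_)
  simp only [and_congr_right_iff]
  intro _
  exact ⟨fun _ t => Nat.zero_le _, fun _ t => (i t).isLt⟩

lemma Isum_eq_zero (n v : ℕ) {β : List ℕ} (h : n < β.length) : Isum n v β = 0 := by
  rw [Isum]
  rw [show (Finset.univ.filter
      (fun i : Fin β.length → Fin n => StrictMono i ∧ ∀ t, v ≤ (i t : ℕ))) = ∅ from ?_]
  · exact Finset.sum_empty
  · rw [Finset.eq_empty_iff_forall_notMem]
    rintro i hi
    simp only [Finset.mem_filter] at hi
    have := Fintype.card_le_of_injective i hi.2.1.injective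
    simp only [Fintype.card_fin] at this
    omega

lemma blocks_injective (N : ℕ) :
    Function.Injective (Composition.blocks : Composition N → List ℕ) := by
  intro c c' h
  cases c; cases c'; simp_all

lemma Fqs_eq_Phi (n : ℕ) (α : List ℕ) : Fqs n n α = Phi n 0 α := by
  rw [Fqs, Phi, refC]
  rw [Finset.sum_image (fun c _ c' _ h => blocks_injective _ h)]
  rw [← Finset.sum_filter_add_sum_filter_not
    (Finset.univ.filter (fun c : Composition α.sum => Refines c.blocks α))
    (fun c => c.blocks.length ≤ n)]
  have h2 : ∀ c ∈ (Finset.univ.filter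
        (fun c : Composition α.sum => Refines c.blocks α)).filter
        (fun c => ¬ c.blocks.length ≤ n), Isum n 0 c.blocks = 0 := by
    intro c hc
    simp only [Finset.mem_filter] at hc
    exact Isum_eq_zero _ _ (by omega)
  rw [Finset.sum_congr rfl h2, Finset.sum_const_zero, add_zero]
  rw [Finset.filter_filter]
  exact Finset.sum_congr rfl (fun c hc => Mqs_eq_Isum n c.blocks)

noncomputable def Ssum (n : ℕ) : ℕ → ℕ → List ℕ → MvPolynomial (Fin n) ℤ
  | _, _, [] => 1
  | p, q, x :: A =>
    ∑ u ∈ Finset.univ.filter (fun u : Fin n => p < (u : ℕ) ∨ (p = (u : ℕ) ∧ q ≤ x)),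
      MvPolynomial.X u * Ssum n (u : ℕ) x A

lemma Ufin_eq (n p q x : ℕ) :
    Finset.univ.filter (fun u : Fin n => p < (u : ℕ) ∨ (p = (u : ℕ) ∧ q ≤ x))
      = Finset.univ.filter (fun u : Fin n => (if q ≤ x then p else p + 1) ≤ (u : ℕ)) := by
  refine Finset.filter_congr (fun u _ => ?_)
  split_ifs with h
  · constructor <;> (intro h2; omega)
  · constructor <;> (intro h2; omega)

lemma runsWeak_cons_cons (x y : ℕ) (l : List ℕ) (r : List ℕ) (rs : List (List ℕ))
    (h : runsWeak (y :: l) = r :: rs) :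
    runsWeak (x :: y :: l) = if x ≤ y then (x :: r) :: rs else [x] :: r :: rs := by
  have e : runsWeak (x :: y :: l) =
      match runsWeak (y :: l), (y :: l) with
      | r :: rs, z :: _ => if x ≤ z then (x :: r) :: rs else [x] :: r :: rs
      | _, _ => [[x]] := rfl
  rw [e, h]

lemma runsWeak_ne (y : ℕ) (l : List ℕ) : ∃ r rs, runsWeak (y :: l) = (y :: r) :: rs := by
  induction l generalizing y with
  | nil => exact ⟨[], [], rfl⟩
  | cons z l' ih =>
    obtain ⟨r, rs, h⟩ := ih z
    by_cases hyz : y ≤ z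
    · exact ⟨z :: r, rs, by rw [runsWeak_cons_cons y z l' _ _ h, if_pos hyz]⟩
    · exact ⟨[], (z :: r) :: rs, by rw [runsWeak_cons_cons y z l' _ _ h, if_neg hyz]⟩

lemma Ssum_eq_Phi (n : ℕ) : ∀ (A : List ℕ) (p q x : ℕ),
    Ssum n p q (x :: A) = Phi n (if q ≤ x then p else p + 1) (desComp (x :: A)) := by
  intro A
  induction A with
  | nil =>
    intro p q x
    have hd : desComp [x] = [1] := rfl
    rw [Ssum, Ufin_eq, hd, Phi_cons one_pos]
    refine Finset.sum_congr rfl (fun u _ => ?_)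
    rw [if_pos rfl, Ssum, Phi_nil]
  | cons y A' ih =>
    intro p q x
    obtain ⟨r, rs, hr⟩ := runsWeak_ne y A'
    have hdy : desComp (y :: A') = (r.length + 1) :: rs.map List.length := by
      simp [desComp, hr]
    by_cases hxy : x ≤ y
    · have hd : desComp (x :: y :: A') = (r.length + 2) :: rs.map List.length := by
        rw [desComp, runsWeak_cons_cons x y A' _ _ hr, if_pos hxy]
        simp
      rw [Ssum, Ufin_eq, hd, Phi_cons (by omega : 0 < r.length + 2)]
      refine Finset.sum_congr rfl (fun u _ => ?_)
      rw [ih (u : ℕ) x y, if_pos hxy, hdy]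
      rw [if_neg (by omega : ¬ r.length + 2 = 1)]
      norm_num
    · have hd : desComp (x :: y :: A') = 1 :: (r.length + 1) :: rs.map List.length := by
        rw [desComp, runsWeak_cons_cons x y A' _ _ hr, if_neg hxy]
        simp [desComp]
      rw [Ssum, Ufin_eq, hd, Phi_cons one_pos]
      refine Finset.sum_congr rfl (fun u _ => ?_)
      rw [ih (u : ℕ) x y, if_neg hxy, hdy]
      rw [if_pos rfl]

lemma multiset_sum_swap {ι χ γ : Type*} [AddCommMonoid γ] (s : Finset ι) (M : Multiset χ)
    (f : ι → χ → γ) :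
    (M.map (fun C => ∑ u ∈ s, f u C)).sum = ∑ u ∈ s, (M.map (f u)).sum := by
  induction M using Multiset.induction_on with
  | empty => simp
  | cons a M ih => simp [ih, Finset.sum_add_distrib]

lemma hrect {n : ℕ} (P : Fin n → Prop) [DecidablePred P] (Q : Fin n → Fin n → Prop)
    [∀ u, DecidablePred (Q u)]
    (T : Fin n → Fin n → MvPolynomial (Fin n) ℤ) :
    ∑ u ∈ Finset.univ.filter P, ∑ w ∈ Finset.univ.filter (Q u), T u w
      = ∑ u : Fin n, ∑ w : Fin n, if P u ∧ Q u w then T u w else 0 := by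
  rw [Finset.sum_filter]
  refine Finset.sum_congr rfl fun u _ => ?_
  rw [Finset.sum_filter]
  by_cases h : P u
  · simp [h]
  · simp [h]

theorem Ssum_shuffle (n : ℕ) : ∀ (N : ℕ) (A B : List ℕ), A.length + B.length ≤ N →
    (∀ x ∈ A, x ∉ B) → ∀ p q : ℕ,
    Ssum n p q A * Ssum n p q B = ((shuffles A B).map (fun C => Ssum n p q C)).sum := by
  intro N
  induction N with
  | zero =>
    intro A B hlen hd p q
    have hA : A = [] := List.length_eq_zero_iff.mp (by omega)
    have hB : B = [] := List.length_eq_zero_iff.mp (by omega)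
    subst hA; subst hB
    rw [shuffles]
    simp [Ssum]
  | succ N ihN =>
    intro A B hlen hd p q
    match A, B with
    | [], B =>
      rw [shuffles]
      simp [Ssum]
    | x :: A', [] =>
      rw [show shuffles (x :: A') [] = {x :: A'} from by rw [shuffles]; simp]
      simp [Ssum]
    | x :: A', y :: B' =>
      have hxy : x ≠ y := by
        intro h
        exact hd x List.mem_cons_self (h ▸ List.mem_cons_self)
      have hd1 : ∀ z ∈ A', z ∉ y :: B' := fun z hz => hd z (List.mem_cons_of_mem _ hz)
      have hd2 : ∀ z ∈ x :: A', z ∉ B' := fun z hz hzB => hd z hz (List.mem_cons_of_mem _ hzB)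
      have hl1 : A'.length + (y :: B').length ≤ N := by simp at hlen ⊢; omega
      have hl2 : (x :: A').length + B'.length ≤ N := by simp at hlen ⊢; omega
      -- RHS
      rw [shuffles, Multiset.map_add, Multiset.sum_add, Multiset.map_map, Multiset.map_map]
      have hR1 : ((shuffles A' (y :: B')).map
            ((fun C => Ssum n p q C) ∘ (x :: ·))).sum
          = ∑ u ∈ Finset.univ.filter
              (fun u : Fin n => p < (u : ℕ) ∨ (p = (u : ℕ) ∧ q ≤ x)),
              MvPolynomial.X u * ((shuffles A' (y :: B')).map
                (fun C => Ssum n (u : ℕ) x C)).sum := by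
        rw [show ((fun C => Ssum n p q C) ∘ (x :: ·))
            = fun C => ∑ u ∈ Finset.univ.filter
              (fun u : Fin n => p < (u : ℕ) ∨ (p = (u : ℕ) ∧ q ≤ x)),
              MvPolynomial.X u * Ssum n (u : ℕ) x C from funext fun C => by
            simp only [Function.comp]; rw [Ssum]]
        rw [multiset_sum_swap]
        exact Finset.sum_congr rfl fun u _ => Multiset.sum_map_mul_left
      have hR2 : ((shuffles (x :: A') B').map
            ((fun C => Ssum n p q C) ∘ (y :: ·))).sum
          = ∑ w ∈ Finset.univ.filter
              (fun w : Fin n => p < (w : ℕ) ∨ (p = (w : ℕ) ∧ q ≤ y)),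
              MvPolynomial.X w * ((shuffles (x :: A') B').map
                (fun C => Ssum n (w : ℕ) y C)).sum := by
        rw [show ((fun C => Ssum n p q C) ∘ (y :: ·))
            = fun C => ∑ w ∈ Finset.univ.filter
              (fun w : Fin n => p < (w : ℕ) ∨ (p = (w : ℕ) ∧ q ≤ y)),
              MvPolynomial.X w * Ssum n (w : ℕ) y C from funext fun C => by
            simp only [Function.comp]; rw [Ssum]]
        rw [multiset_sum_swap]
        exact Finset.sum_congr rfl fun w _ => Multiset.sum_map_mul_left
      rw [hR1, hR2]
      -- LHS
      rw [Ssum, Ssum, Finset.sum_mul_sum]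
      have e1 : (∑ u ∈ Finset.univ.filter
            (fun u : Fin n => p < (u : ℕ) ∨ (p = (u : ℕ) ∧ q ≤ x)),
          ∑ w ∈ Finset.univ.filter
            (fun w : Fin n => p < (w : ℕ) ∨ (p = (w : ℕ) ∧ q ≤ y)),
          (MvPolynomial.X u * Ssum n (u : ℕ) x A') *
            (MvPolynomial.X w * Ssum n (w : ℕ) y B'))
          = ∑ u : Fin n, ∑ w : Fin n,
            if (p < (u : ℕ) ∨ (p = (u : ℕ) ∧ q ≤ x)) ∧ (p < (w : ℕ) ∨ (p = (w : ℕ) ∧ q ≤ y))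
            then (MvPolynomial.X u * Ssum n (u : ℕ) x A') *
              (MvPolynomial.X w * Ssum n (w : ℕ) y B') else 0 :=
        hrect (fun u => p < (u : ℕ) ∨ (p = (u : ℕ) ∧ q ≤ x))
          (fun _ w => p < (w : ℕ) ∨ (p = (w : ℕ) ∧ q ≤ y))
          (fun u w => (MvPolynomial.X u * Ssum n (u : ℕ) x A') *
            (MvPolynomial.X w * Ssum n (w : ℕ) y B'))
      have e2 : (∑ u ∈ Finset.univ.filter
            (fun u : Fin n => p < (u : ℕ) ∨ (p = (u : ℕ) ∧ q ≤ x)),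
          ∑ w ∈ Finset.univ.filter
            (fun w : Fin n => (u : ℕ) < (w : ℕ) ∨ ((u : ℕ) = (w : ℕ) ∧ x ≤ y)),
          (MvPolynomial.X u * Ssum n (u : ℕ) x A') *
            (MvPolynomial.X w * Ssum n (w : ℕ) y B'))
          = ∑ u : Fin n, ∑ w : Fin n,
            if (p < (u : ℕ) ∨ (p = (u : ℕ) ∧ q ≤ x)) ∧
                ((u : ℕ) < (w : ℕ) ∨ ((u : ℕ) = (w : ℕ) ∧ x ≤ y))
            then (MvPolynomial.X u * Ssum n (u : ℕ) x A') *
              (MvPolynomial.X w * Ssum n (w : ℕ) y B') else 0 :=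
        hrect (fun u => p < (u : ℕ) ∨ (p = (u : ℕ) ∧ q ≤ x))
          (fun u w => (u : ℕ) < (w : ℕ) ∨ ((u : ℕ) = (w : ℕ) ∧ x ≤ y))
          (fun u w => (MvPolynomial.X u * Ssum n (u : ℕ) x A') *
            (MvPolynomial.X w * Ssum n (w : ℕ) y B'))
      have e3 : (∑ w ∈ Finset.univ.filter
            (fun w : Fin n => p < (w : ℕ) ∨ (p = (w : ℕ) ∧ q ≤ y)),
          ∑ u ∈ Finset.univ.filter
            (fun u : Fin n => (w : ℕ) < (u : ℕ) ∨ ((w : ℕ) = (u : ℕ) ∧ y ≤ x)),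
          (MvPolynomial.X u * Ssum n (u : ℕ) x A') *
            (MvPolynomial.X w * Ssum n (w : ℕ) y B'))
          = ∑ w : Fin n, ∑ u : Fin n,
            if (p < (w : ℕ) ∨ (p = (w : ℕ) ∧ q ≤ y)) ∧
                ((w : ℕ) < (u : ℕ) ∨ ((w : ℕ) = (u : ℕ) ∧ y ≤ x))
            then (MvPolynomial.X u * Ssum n (u : ℕ) x A') *
              (MvPolynomial.X w * Ssum n (w : ℕ) y B') else 0 :=
        hrect (fun w => p < (w : ℕ) ∨ (p = (w : ℕ) ∧ q ≤ y))
          (fun w u => (w : ℕ) < (u : ℕ) ∨ ((w : ℕ) = (u : ℕ) ∧ y ≤ x))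
          (fun w u => (MvPolynomial.X u * Ssum n (u : ℕ) x A') *
            (MvPolynomial.X w * Ssum n (w : ℕ) y B'))
      have key : ∀ u w : Fin n,
          (if (p < (u : ℕ) ∨ (p = (u : ℕ) ∧ q ≤ x)) ∧ (p < (w : ℕ) ∨ (p = (w : ℕ) ∧ q ≤ y))
            then (MvPolynomial.X u * Ssum n (u : ℕ) x A') *
              (MvPolynomial.X w * Ssum n (w : ℕ) y B') else 0)
          = (if (p < (u : ℕ) ∨ (p = (u : ℕ) ∧ q ≤ x)) ∧
                ((u : ℕ) < (w : ℕ) ∨ ((u : ℕ) = (w : ℕ) ∧ x ≤ y))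
            then (MvPolynomial.X u * Ssum n (u : ℕ) x A') *
              (MvPolynomial.X w * Ssum n (w : ℕ) y B') else 0)
          + (if (p < (w : ℕ) ∨ (p = (w : ℕ) ∧ q ≤ y)) ∧
                ((w : ℕ) < (u : ℕ) ∨ ((w : ℕ) = (u : ℕ) ∧ y ≤ x))
            then (MvPolynomial.X u * Ssum n (u : ℕ) x A') *
              (MvPolynomial.X w * Ssum n (w : ℕ) y B') else 0) := by
        intro u w
        by_cases h1 : (p < (u : ℕ) ∨ (p = (u : ℕ) ∧ q ≤ x)) ∧
            ((u : ℕ) < (w : ℕ) ∨ ((u : ℕ) = (w : ℕ) ∧ x ≤ y))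
        · rw [if_pos h1, if_pos (by omega), if_neg (by omega), add_zero]
        · by_cases h2 : (p < (w : ℕ) ∨ (p = (w : ℕ) ∧ q ≤ y)) ∧
              ((w : ℕ) < (u : ℕ) ∨ ((w : ℕ) = (u : ℕ) ∧ y ≤ x))
          · rw [if_neg h1, if_pos (by omega), if_pos h2, zero_add]
          · rw [if_neg h1, if_neg h2, if_neg (by omega), add_zero]
      rw [e1]
      have e4 : (∑ u : Fin n, ∑ w : Fin n,
          if (p < (u : ℕ) ∨ (p = (u : ℕ) ∧ q ≤ x)) ∧ (p < (w : ℕ) ∨ (p = (w : ℕ) ∧ q ≤ y))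
            then (MvPolynomial.X u * Ssum n (u : ℕ) x A') *
              (MvPolynomial.X w * Ssum n (w : ℕ) y B') else 0)
          = (∑ u : Fin n, ∑ w : Fin n,
            if (p < (u : ℕ) ∨ (p = (u : ℕ) ∧ q ≤ x)) ∧
                ((u : ℕ) < (w : ℕ) ∨ ((u : ℕ) = (w : ℕ) ∧ x ≤ y))
              then (MvPolynomial.X u * Ssum n (u : ℕ) x A') *
                (MvPolynomial.X w * Ssum n (w : ℕ) y B') else 0)
          + (∑ u : Fin n, ∑ w : Fin n,
            if (p < (w : ℕ) ∨ (p = (w : ℕ) ∧ q ≤ y)) ∧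
                ((w : ℕ) < (u : ℕ) ∨ ((w : ℕ) = (u : ℕ) ∧ y ≤ x))
              then (MvPolynomial.X u * Ssum n (u : ℕ) x A') *
                (MvPolynomial.X w * Ssum n (w : ℕ) y B') else 0) := by
        rw [← Finset.sum_add_distrib]
        refine Finset.sum_congr rfl fun u _ => ?_
        rw [← Finset.sum_add_distrib]
        exact Finset.sum_congr rfl fun w _ => key u w
      rw [e4]
      congr 1
      · -- first piece
        rw [← e2]
        refine Finset.sum_congr rfl fun u _ => ?_
        have e5 : (∑ w ∈ Finset.univ.filter
              (fun w : Fin n => (u : ℕ) < (w : ℕ) ∨ ((u : ℕ) = (w : ℕ) ∧ x ≤ y)),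
            MvPolynomial.X w * Ssum n (w : ℕ) y B') = Ssum n (u : ℕ) x (y :: B') :=
          (by rw [Ssum] : Ssum n (u : ℕ) x (y :: B') = _).symm
        calc ∑ w ∈ Finset.univ.filter
              (fun w : Fin n => (u : ℕ) < (w : ℕ) ∨ ((u : ℕ) = (w : ℕ) ∧ x ≤ y)),
              (MvPolynomial.X u * Ssum n (u : ℕ) x A') *
                (MvPolynomial.X w * Ssum n (w : ℕ) y B')
            = (MvPolynomial.X u * Ssum n (u : ℕ) x A') * Ssum n (u : ℕ) x (y :: B') := by
              rw [← Finset.mul_sum, e5]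
          _ = MvPolynomial.X u * (Ssum n (u : ℕ) x A' * Ssum n (u : ℕ) x (y :: B')) := by
              ring
          _ = MvPolynomial.X u * ((shuffles A' (y :: B')).map
                (fun C => Ssum n (u : ℕ) x C)).sum := by
              rw [ihN A' (y :: B') hl1 hd1 (u : ℕ) x]
      · -- second piece
        rw [show (∑ u : Fin n, ∑ w : Fin n,
            if (p < (w : ℕ) ∨ (p = (w : ℕ) ∧ q ≤ y)) ∧
                ((w : ℕ) < (u : ℕ) ∨ ((w : ℕ) = (u : ℕ) ∧ y ≤ x))
              then (MvPolynomial.X u * Ssum n (u : ℕ) x A') *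
                (MvPolynomial.X w * Ssum n (w : ℕ) y B') else 0)
          = (∑ w : Fin n, ∑ u : Fin n,
            if (p < (w : ℕ) ∨ (p = (w : ℕ) ∧ q ≤ y)) ∧
                ((w : ℕ) < (u : ℕ) ∨ ((w : ℕ) = (u : ℕ) ∧ y ≤ x))
              then (MvPolynomial.X u * Ssum n (u : ℕ) x A') *
                (MvPolynomial.X w * Ssum n (w : ℕ) y B') else 0) from Finset.sum_comm]
        rw [← e3]
        refine Finset.sum_congr rfl fun w _ => ?_
        have e6 : (∑ u ∈ Finset.univ.filter
              (fun u : Fin n => (w : ℕ) < (u : ℕ) ∨ ((w : ℕ) = (u : ℕ) ∧ y ≤ x)),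
            MvPolynomial.X u * Ssum n (u : ℕ) x A') = Ssum n (w : ℕ) y (x :: A') :=
          (by rw [Ssum] : Ssum n (w : ℕ) y (x :: A') = _).symm
        calc ∑ u ∈ Finset.univ.filter
              (fun u : Fin n => (w : ℕ) < (u : ℕ) ∨ ((w : ℕ) = (u : ℕ) ∧ y ≤ x)),
              (MvPolynomial.X u * Ssum n (u : ℕ) x A') *
                (MvPolynomial.X w * Ssum n (w : ℕ) y B')
            = Ssum n (w : ℕ) y (x :: A') * (MvPolynomial.X w * Ssum n (w : ℕ) y B') := by
              rw [← Finset.sum_mul, e6]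
          _ = MvPolynomial.X w * (Ssum n (w : ℕ) y (x :: A') * Ssum n (w : ℕ) y B') := by
              ring
          _ = MvPolynomial.X w * ((shuffles (x :: A') B').map
                (fun C => Ssum n (w : ℕ) y C)).sum := by
              rw [ihN (x :: A') B' hl2 hd2 (w : ℕ) y]


/-- for words `A`, `B` with no common letter and `Des(A) = α`, `Des(B) = β`,
`F_α · F_β = Σ_{C ∈ A ⧢ B} F_{Des(C)}` in any number of variables. -/
theorem fundamentalQsym_mul_shuffle (A B : List ℕ) (hA : ∀ x ∈ A, 0 < x)
    (hB : ∀ x ∈ B, 0 < x) (hdisj : ∀ x ∈ A, x ∉ B) (α β : List ℕ)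
    (hα : desComp A = α) (hβ : desComp B = β) (n : ℕ) (hn : 1 ≤ n) :
    Fqs n n α * Fqs n n β = ((shuffles A B).map (fun C => Fqs n n (desComp C))).sum := by
  subst hα; subst hβ
  have bridge : ∀ W : List ℕ, Fqs n n (desComp W) = Ssum n 0 0 W := by
    intro W
    cases W with
    | nil =>
      rw [Fqs_eq_Phi]
      show Phi n 0 (desComp []) = Ssum n 0 0 []
      rw [show desComp [] = [] from rfl, Phi_nil, Ssum]
    | cons x W' =>
      rw [Fqs_eq_Phi, Ssum_eq_Phi n W' 0 0 x, if_pos (Nat.zero_le x)]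
  rw [bridge A, bridge B, Ssum_shuffle n (A.length + B.length) A B le_rfl hdisj 0 0]
  refine congrArg Multiset.sum (Multiset.map_congr rfl (fun C _ => ?_))
  exact (bridge C).symm

end SlidePaper
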